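/- In the two-player game of Figure 4 (chain of length k from s₀ via M_k to absorbing s_exp, with player-1 action a₂^r at s₀ jumping directly to s_exp), for k = ⌈log(ε(1−γ)/2)/log(γ)⌉ and the Nash equilibrium π^E constantly playing (a₁^r, a₂^c), the expert occupancy of the absorbing state satisfies μ_{π^E}(s_exp) ≤ ε/2; consequently the policy π agreeing with π^E everywhere except playing (a₁^r, a₁^c) at s_exp has BC error at most ε, while a best response of player 1 to π₂ differs from π^E₁ with expected L1 distance exactly 2 under μ_{π^E}. -/

import Mathlib

open scoped BigOperators

namespace MAIL

/-- An `n`-player Markov Game with finite state space `S` and finite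
per-player action spaces `A i` (joint actions are dependent functions). -/
structure Game (n : ℕ) (S : Type) (A : Fin n → Type) [Fintype S] [∀ i, Fintype (A i)] where
  P : S → (∀ i, A i) → S → ℝ
  r : Fin n → S → (∀ i, A i) → ℝ
  ν₀ : S → ℝ
  γ : ℝ

variable {n : ℕ} {S : Type} {A : Fin n → Type} [Fintype S] [∀ i, Fintype (A i)]

/-- A (per-player or joint) policy is a probability distribution over actions at each state. -/
def IsPol {B : Type} [Fintype B] (π : S → B → ℝ) : Prop :=
  (∀ s b, 0 ≤ π s b) ∧ ∀ s, ∑ b, π s b = 1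

/-- Standard validity assumptions on a game: `γ ∈ [0,1)`, `ν₀` a distribution,
`P` a transition kernel, rewards bounded in `[-1,1]`. -/
def IsGame (G : Game n S A) : Prop :=
  0 ≤ G.γ ∧ G.γ < 1 ∧ (∀ s, 0 ≤ G.ν₀ s) ∧ (∑ s, G.ν₀ s = 1) ∧
    (∀ s a, (∀ s', 0 ≤ G.P s a s') ∧ ∑ s', G.P s a s' = 1) ∧
    (∀ i s a, |G.r i s a| ≤ 1)

/-- Joint (product) policy induced by independent per-player policies. -/
def joint (π : ∀ i, S → A i → ℝ) : S → (∀ i, A i) → ℝ :=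
  fun s a => ∏ i, π i s (a i)

/-- `stateDist G π t s = P(s_t = s)` when rolling out joint policy `π`. -/
def stateDist (G : Game n S A) (π : S → (∀ i, A i) → ℝ) : ℕ → S → ℝ
  | 0 => G.ν₀
  | t + 1 => fun s' => ∑ s : S, ∑ a : (∀ i, A i), stateDist G π t s * π s a * G.P s a s'

/-- Discounted state occupancy measure `μ_π(s) = (1-γ) ∑_t γ^t P(s_t = s)`. -/
noncomputable def occ (G : Game n S A) (π : S → (∀ i, A i) → ℝ) (s : S) : ℝ :=
  (1 - G.γ) * ∑' t : ℕ, G.γ ^ t * stateDist G π t s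

/-- State-action occupancy measure `ρ_π(s,a) = μ_π(s) π(a|s)`. -/
noncomputable def saOcc (G : Game n S A) (π : S → (∀ i, A i) → ℝ)
    (s : S) (a : ∀ i, A i) : ℝ :=
  occ G π s * π s a

/-- Player `i`'s value `V_i^π(ν₀) = (1/(1-γ)) E_{(s,a)∼ρ_π}[r_i(s,a)]`. -/
noncomputable def value (G : Game n S A) (i : Fin n) (π : S → (∀ i, A i) → ℝ) : ℝ :=
  (1 / (1 - G.γ)) * ∑ s : S, ∑ a : (∀ i, A i), saOcc G π s a * G.r i s a

/-- Player `i`'s value started from the Dirac distribution at state `s`. -/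
noncomputable def valueFrom [DecidableEq S] (G : Game n S A) (i : Fin n)
    (π : S → (∀ i, A i) → ℝ) (s₀ : S) : ℝ :=
  value { G with ν₀ := fun s => if s = s₀ then 1 else 0 } i π

/-- State-action value `Q_i^π(s,a) = r_i(s,a) + γ ∑_{s'} P(s'|s,a) V_i^π(s')`. -/
noncomputable def Qf [DecidableEq S] (G : Game n S A) (i : Fin n)
    (π : S → (∀ i, A i) → ℝ) (s : S) (a : ∀ i, A i) : ℝ :=
  G.r i s a + G.γ * ∑ s' : S, G.P s a s' * valueFrom G i π s'

/-- Unilateral deviation: player `i` switches to `πi'`, the others keep `π`. -/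
def dev (π : ∀ i, S → A i → ℝ) (i : Fin n) (πi' : S → A i → ℝ) :
    ∀ j, S → A j → ℝ :=
  Function.update π i πi'

/-- Behavioral-cloning error of player `i`:
`E_{s ∼ μ_{π^E}} ‖π_i(·|s) − π^E_i(·|s)‖₁`. -/
noncomputable def bcErr (G : Game n S A) (πE π : ∀ i, S → A i → ℝ) (i : Fin n) : ℝ :=
  ∑ s : S, occ G (joint πE) s * ∑ b : A i, |π i s b - πE i s b|

end MAIL

namespace MAIL

/-- The two-player game of Figure 4. States are `Fin (k+2)`: state `0` is `s₀`,
states `1,…,k` form the deterministic chain `M_k`, and state `k+1` is the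
absorbing state `s_exp`. Player 1's actions are `a₁^r = 0` (enter the chain)
and `a₂^r = 1` (jump directly to `s_exp`) — they only matter at `s₀`; player
2's actions are `a₁^c = 0` and `a₂^c = 1`. Rewards are nonzero only at `s_exp`
and depend only on player 2's action: `r₁ = 1` if player 2 plays `a₁^c`,
`r₁ = -1` if `a₂^c`, and `r₂ = 1` if `a₂^c`. The game starts at `s₀`. -/
noncomputable def chainJumpGame (k : ℕ) (γ : ℝ) : Game 2 (Fin (k + 2)) (fun _ => Fin 2) where
  P := fun s a s' =>
    if s.val = 0 then
      (if a 0 = 0 then (if s'.val = 1 then (1 : ℝ) else 0)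
       else (if s'.val = k + 1 then 1 else 0))
    else if s.val = k + 1 then (if s' = s then 1 else 0)
    else (if s'.val = s.val + 1 then 1 else 0)
  r := fun i s a =>
    if s.val = k + 1 then
      (if i = 0 then (if a 1 = 0 then (1 : ℝ) else -1)
       else (if a 1 = 1 then 1 else 0))
    else 0
  ν₀ := fun s => if s.val = 0 then 1 else 0
  γ := γ

/-- The Nash equilibrium expert: player 1 constantly plays `a₁^r`, player 2
constantly plays `a₂^c`. -/
def jumpExpert (k : ℕ) : ∀ _ : Fin 2, Fin (k + 2) → Fin 2 → ℝ :=
  fun i _ a =>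
    if i = 0 then (if a = 0 then 1 else 0) else (if a = 1 then 1 else 0)

/-- The BC policy `π`: agrees with `π^E` everywhere except that player 2 plays
`a₁^c` at `s_exp`. -/
def jumpLearner (k : ℕ) : ∀ i : Fin 2, Fin (k + 2) → Fin 2 → ℝ :=
  fun i s a =>
    if i = 0 then (if a = 0 then 1 else 0)
    else if s.val = k + 1 then (if a = 0 then 1 else 0)
    else (if a = 1 then 1 else 0)

/-- Player 1's best response to `π₂`: constantly play `a₂^r` (jump to `s_exp`). -/
def jumpBR (k : ℕ) : Fin (k + 2) → Fin 2 → ℝ :=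
  fun _ a => if a = 1 then 1 else 0

section Helpers

variable {k : ℕ} {γ : ℝ}

lemma sum_pi2 (f : (∀ _ : Fin 2, Fin 2) → ℝ) :
    ∑ a : (∀ _ : Fin 2, Fin 2), f a = ∑ x : Fin 2, ∑ y : Fin 2, f ![x, y] :=
  calc ∑ a : (∀ _ : Fin 2, Fin 2), f a
      = ∑ q : Fin 2 × Fin 2, f ![q.1, q.2] :=
        Fintype.sum_equiv (piFinTwoEquiv fun _ => Fin 2) _ _
          (by intro a; congr 1; ext i; fin_cases i <;> rfl)
    _ = ∑ x : Fin 2, ∑ y : Fin 2, f ![x, y] := Fintype.sum_prod_type _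

lemma joint_sum_one (ρ : ∀ _ : Fin 2, Fin (k + 2) → Fin 2 → ℝ)
    (h0 : IsPol (ρ 0)) (h1 : IsPol (ρ 1)) (s : Fin (k + 2)) :
    ∑ a : (∀ _ : Fin 2, Fin 2), joint ρ s a = 1 := by
  rw [sum_pi2]
  simp only [joint, Fin.prod_univ_two, Matrix.cons_val_zero, Matrix.cons_val_one,
    Matrix.head_cons]
  rw [← Finset.sum_mul_sum]
  rw [h0.2 s, h1.2 s, one_mul]

end Helpers
noncomputable def dd (k : ℕ) (p : ℝ) (t : ℕ) (s : Fin (k + 2)) : ℝ :=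
  if t = 0 then (if s.val = 0 then 1 else 0)
  else if s.val = k + 1 then (if k + 1 ≤ t then 1 else 1 - p)
  else if s.val = t then p else 0

section Helpers2

variable {k : ℕ} {γ : ℝ}

lemma step_eq (ρ : ∀ _ : Fin 2, Fin (k + 2) → Fin 2 → ℝ)
    (h0 : IsPol (ρ 0)) (h1 : IsPol (ρ 1)) (s s' : Fin (k + 2)) :
    ∑ a : (∀ _ : Fin 2, Fin 2), joint ρ s a * (chainJumpGame k γ).P s a s' =
      if s.val = 0 then
        ρ 0 s 0 * (if s'.val = 1 then 1 else 0) +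
          (1 - ρ 0 s 0) * (if s'.val = k + 1 then 1 else 0)
      else if s.val = k + 1 then (if s' = s then 1 else 0)
      else (if s'.val = s.val + 1 then 1 else 0) := by
  by_cases hs0 : s.val = 0
  · simp only [chainJumpGame, hs0, if_pos rfl, if_true]
    rw [sum_pi2]
    simp only [joint, Fin.prod_univ_two, Matrix.cons_val_zero, Matrix.cons_val_one,
      Matrix.head_cons]
    rw [Fin.sum_univ_two]
    simp only [Fin.sum_univ_two]
    have e0 := h0.2 s
    have e1 := h1.2 s
    rw [Fin.sum_univ_two] at e0 e1
    simp only [if_pos rfl, if_neg (by decide : ¬(1 : Fin 2) = 0), if_true]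
    set A := (if s'.val = 1 then (1:ℝ) else 0)
    set B := (if s'.val = k + 1 then (1:ℝ) else 0)
    erw [if_neg (show ¬((1 : Fin 2) = 0) by decide)]
    linear_combination (A * ρ 0 s 0) * e1 + (B * ρ 0 s 1) * e1 + B * e0
  · have hP : ∀ a : (∀ _ : Fin 2, Fin 2), (chainJumpGame k γ).P s a s' =
        (if s.val = k + 1 then (if s' = s then (1:ℝ) else 0)
         else (if s'.val = s.val + 1 then 1 else 0)) := by
      intro a; simp only [chainJumpGame, hs0, if_false, reduceIte]
    simp only [hP, if_neg hs0]
    rw [← Finset.sum_mul, joint_sum_one ρ h0 h1, one_mul]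

end Helpers2
section Helpers3

variable {k : ℕ} {γ : ℝ}

lemma hswap (c F : ℝ) (P : Prop) [Decidable P] :
    (c * (if P then (1:ℝ) else 0)) * F = if P then c * F else 0 := by
  split_ifs <;> ring

lemma stateDist_eq (ρ : ∀ _ : Fin 2, Fin (k + 2) → Fin 2 → ℝ)
    (h0 : IsPol (ρ 0)) (h1 : IsPol (ρ 1)) (t : ℕ) :
    stateDist (chainJumpGame k γ) (joint ρ) t =
      dd k (ρ 0 ⟨0, by omega⟩ 0) t := by
  induction t with
  | zero =>
    funext s
    show (chainJumpGame k γ).ν₀ s = _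
    simp [chainJumpGame, dd]
  | succ t ih =>
    funext s'
    show ∑ s : Fin (k+2), ∑ a : (∀ _ : Fin 2, Fin 2),
        stateDist (chainJumpGame k γ) (joint ρ) t s * joint ρ s a *
        (chainJumpGame k γ).P s a s' = _
    rw [ih]
    set p := ρ 0 ⟨0, by omega⟩ 0 with hp
    have key : ∀ s : Fin (k+2), ∑ a : (∀ _ : Fin 2, Fin 2),
        dd k p t s * joint ρ s a * (chainJumpGame k γ).P s a s' =
        dd k p t s * (if s.val = 0 then
          ρ 0 s 0 * (if s'.val = 1 then 1 else 0) +
            (1 - ρ 0 s 0) * (if s'.val = k + 1 then 1 else 0)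
        else if s.val = k + 1 then (if s' = s then 1 else 0)
        else (if s'.val = s.val + 1 then 1 else 0)) := by
      intro s
      rw [← step_eq (γ := γ) ρ h0 h1 s s', Finset.mul_sum]
      simp only [mul_assoc]
    simp only [key]
    have hs'lt := s'.isLt
    by_cases ht0 : t = 0
    · subst ht0
      have hdd0 : ∀ s : Fin (k+2), dd k p 0 s =
          1 * (if s = (⟨0, by omega⟩ : Fin (k+2)) then 1 else 0) := by
        intro s; simp only [dd, Fin.ext_iff, Fin.val_mk, one_mul, eq_self_iff_true, if_true]
      simp only [hdd0, hswap, Finset.sum_ite_eq', Finset.mem_univ, if_true]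
      rw [← hp]
      simp only [dd, Fin.ext_iff]
      norm_num
      split_ifs <;> first | omega | ring | norm_num
    · by_cases htk : k + 1 ≤ t
      · have hdd : ∀ s : Fin (k+2), dd k p t s =
            1 * (if s = (⟨k+1, by omega⟩ : Fin (k+2)) then 1 else 0) := by
          intro s
          have := s.isLt
          simp only [dd, Fin.ext_iff, if_neg ht0]
          norm_num
          split_ifs <;> first | omega | norm_num
        simp only [hdd, hswap, Finset.sum_ite_eq', Finset.mem_univ, if_true]
        simp only [dd, Fin.ext_iff]
        norm_num
        split_ifs <;> first | omega | norm_num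
      · have hdd : ∀ s : Fin (k+2), dd k p t s =
            (1 - p) * (if s = (⟨k+1, by omega⟩ : Fin (k+2)) then 1 else 0) +
              p * (if s = (⟨t, by omega⟩ : Fin (k+2)) then 1 else 0) := by
          intro s
          simp only [dd, Fin.ext_iff, if_neg ht0]
          norm_num
          split_ifs <;> first | omega | ring | norm_num
        simp only [hdd, add_mul, hswap, Finset.sum_add_distrib,
          Finset.sum_ite_eq', Finset.mem_univ, if_true]
        simp only [dd, Fin.ext_iff, if_neg ht0]
        norm_num
        split_ifs <;> first | omega | ring | norm_num

end Helpers3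
section Helpers4

variable {k : ℕ} {γ p : ℝ}

lemma dd_nonneg (hp0 : 0 ≤ p) (hp1 : p ≤ 1) (t : ℕ) (s : Fin (k+2)) : 0 ≤ dd k p t s := by
  unfold dd; split_ifs <;> linarith

lemma dd_le_one (hp0 : 0 ≤ p) (hp1 : p ≤ 1) (t : ℕ) (s : Fin (k+2)) : dd k p t s ≤ 1 := by
  unfold dd; split_ifs <;> linarith

lemma sum_dd (p : ℝ) (t : ℕ) : ∑ s : Fin (k+2), dd k p t s = 1 := by
  by_cases ht0 : t = 0
  · subst ht0
    have hdd0 : ∀ s : Fin (k+2), dd k p 0 s =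
        if s = (⟨0, by omega⟩ : Fin (k+2)) then 1 else 0 := by
      intro s; simp only [dd, Fin.ext_iff, Fin.val_mk, eq_self_iff_true, if_true]
    simp only [hdd0, Finset.sum_ite_eq', Finset.sum_ite_eq, Finset.mem_univ, if_true]
  · by_cases htk : k + 1 ≤ t
    · have hdd : ∀ s : Fin (k+2), dd k p t s =
          if s = (⟨k+1, by omega⟩ : Fin (k+2)) then 1 else 0 := by
        intro s; have := s.isLt; simp only [dd, Fin.ext_iff, if_neg ht0]
        split_ifs <;> first | omega | norm_num
      simp [hdd]
    · have hdd : ∀ s : Fin (k+2), dd k p t s =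
          (1 - p) * (if s = (⟨k+1, by omega⟩ : Fin (k+2)) then 1 else 0) +
            p * (if s = (⟨t, by omega⟩ : Fin (k+2)) then 1 else 0) := by
        intro s; simp only [dd, Fin.ext_iff, if_neg ht0]
        split_ifs <;> first | omega | ring
      rw [Finset.sum_congr rfl fun s _ => hdd s, Finset.sum_add_distrib,
        ← Finset.mul_sum, ← Finset.mul_sum]
      simp only [Finset.sum_ite_eq', Finset.mem_univ, if_true]
      ring

lemma dd_summable (hγ0 : 0 ≤ γ) (hγ1 : γ < 1) (hp0 : 0 ≤ p) (hp1 : p ≤ 1) (s : Fin (k+2)) :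
    Summable (fun t => γ ^ t * dd k p t s) := by
  apply Summable.of_nonneg_of_le
    (fun t => mul_nonneg (pow_nonneg hγ0 t) (dd_nonneg hp0 hp1 t s))
    (fun t => ?_) (summable_geometric_of_lt_one hγ0 hγ1)
  calc γ ^ t * dd k p t s ≤ γ ^ t * 1 :=
        mul_le_mul_of_nonneg_left (dd_le_one hp0 hp1 t s) (pow_nonneg hγ0 t)
    _ = γ ^ t := mul_one _

lemma pol_bounds (π : Fin (k+2) → Fin 2 → ℝ) (h : IsPol π) (s : Fin (k+2)) :
    0 ≤ π s 0 ∧ π s 0 ≤ 1 := by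
  have h2 := h.2 s
  rw [Fin.sum_univ_two] at h2
  have := h.1 s 0
  have := h.1 s 1
  exact ⟨by linarith, by linarith⟩

lemma occ_sE (ρ : ∀ _ : Fin 2, Fin (k + 2) → Fin 2 → ℝ)
    (h0 : IsPol (ρ 0)) (h1 : IsPol (ρ 1)) (hγ0 : 0 ≤ γ) (hγ1 : γ < 1) :
    occ (chainJumpGame k γ) (joint ρ) ⟨k+1, by omega⟩ =
      (1 - ρ 0 ⟨0, by omega⟩ 0) * γ + ρ 0 ⟨0, by omega⟩ 0 * γ^(k+1) := by
  obtain ⟨hp0, hp1⟩ := pol_bounds (ρ 0) h0 ⟨0, by omega⟩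
  set p := ρ 0 ⟨0, by omega⟩ 0 with hpdef
  unfold occ
  simp only [stateDist_eq ρ h0 h1, ← hpdef]
  have hsum := dd_summable (k := k) hγ0 hγ1 hp0 hp1 (⟨k+1, by omega⟩ : Fin (k+2))
  rw [show (chainJumpGame k γ).γ = γ from rfl]
  rw [← hsum.sum_add_tsum_nat_add (k+1)]
  have h2 : ∀ t : ℕ, γ ^ (t + (k+1)) * dd k p (t + (k+1)) (⟨k+1, by omega⟩ : Fin (k+2)) =
      γ^(k+1) * γ^t := by
    intro t
    have hd : dd k p (t + (k+1)) (⟨k+1, by omega⟩ : Fin (k+2)) = 1 := by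
      simp only [dd]; split_ifs <;> first | rfl | omega | (exfalso; assumption)
    rw [hd, mul_one, pow_add]; ring
  rw [tsum_congr h2, tsum_mul_left, tsum_geometric_of_lt_one hγ0 hγ1]
  rw [Finset.sum_range_succ']
  have hf0 : γ ^ 0 * dd k p 0 (⟨k+1, by omega⟩ : Fin (k+2)) = 0 := by
    simp only [dd]; norm_num
  have hfi : ∀ i ∈ Finset.range k, γ ^ (i+1) * dd k p (i+1) (⟨k+1, by omega⟩ : Fin (k+2)) =
      (1 - p) * γ * γ ^ i := by
    intro i hi
    rw [Finset.mem_range] at hi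
    have hd : dd k p (i+1) (⟨k+1, by omega⟩ : Fin (k+2)) = 1 - p := by
      simp only [dd]; split_ifs <;> first | rfl | omega | (exfalso; assumption)
    rw [hd, pow_succ]; ring
  rw [Finset.sum_congr rfl hfi, hf0, ← Finset.mul_sum, geom_sum_eq hγ1.ne]
  have hne : (1:ℝ) - γ ≠ 0 := by linarith
  have hne2 : γ - 1 ≠ 0 := by intro h; apply hne; linarith
  field_simp
  ring

lemma occ_sum_one (ρ : ∀ _ : Fin 2, Fin (k + 2) → Fin 2 → ℝ)
    (h0 : IsPol (ρ 0)) (h1 : IsPol (ρ 1)) (hγ0 : 0 ≤ γ) (hγ1 : γ < 1) :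
    ∑ s : Fin (k+2), occ (chainJumpGame k γ) (joint ρ) s = 1 := by
  obtain ⟨hp0, hp1⟩ := pol_bounds (ρ 0) h0 ⟨0, by omega⟩
  unfold occ
  simp only [stateDist_eq ρ h0 h1]
  rw [show (chainJumpGame k γ).γ = γ from rfl, ← Finset.mul_sum]
  rw [← Summable.tsum_finsetSum (fun s _ => dd_summable hγ0 hγ1 hp0 hp1 s)]
  have h2 : ∀ t : ℕ, ∑ s : Fin (k+2), γ ^ t * dd k (ρ 0 ⟨0, by omega⟩ 0) t s = γ ^ t := by
    intro t; rw [← Finset.mul_sum, sum_dd, mul_one]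
  rw [tsum_congr h2, tsum_geometric_of_lt_one hγ0 hγ1]
  field_simp
  exact div_self (by linarith)

end Helpers4
section Helpers5

variable {k : ℕ} {γ : ℝ}

lemma value_eq (ρ : ∀ _ : Fin 2, Fin (k + 2) → Fin 2 → ℝ) (i : Fin 2) :
    value (chainJumpGame k γ) i (joint ρ) =
      (1 / (1 - γ)) * (occ (chainJumpGame k γ) (joint ρ) ⟨k+1, by omega⟩ *
        ∑ a : (∀ _ : Fin 2, Fin 2), joint ρ ⟨k+1, by omega⟩ a *
          (chainJumpGame k γ).r i ⟨k+1, by omega⟩ a) := by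
  unfold value saOcc
  rw [show (chainJumpGame k γ).γ = γ from rfl]
  congr 1
  rw [Finset.sum_eq_single (⟨k+1, by omega⟩ : Fin (k+2))]
  · rw [Finset.mul_sum]
    exact Finset.sum_congr rfl fun a _ => by ring
  · intro s _ hs
    apply Finset.sum_eq_zero; intro a _
    have hr : (chainJumpGame k γ).r i s a = 0 := by
      simp only [chainJumpGame]
      rw [if_neg]
      intro h
      exact hs (Fin.ext h)
    rw [hr, mul_zero]
  · intro h; exact absurd (Finset.mem_univ _) h

lemma value_formula (ρ : ∀ _ : Fin 2, Fin (k + 2) → Fin 2 → ℝ)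
    (h0 : IsPol (ρ 0)) (i : Fin 2) :
    value (chainJumpGame k γ) i (joint ρ) =
      (1 / (1 - γ)) * (occ (chainJumpGame k γ) (joint ρ) ⟨k+1, by omega⟩ *
        (if i = 0 then ρ 1 ⟨k+1, by omega⟩ 0 - ρ 1 ⟨k+1, by omega⟩ 1
         else ρ 1 ⟨k+1, by omega⟩ 1)) := by
  rw [value_eq ρ i]
  congr 2
  rw [sum_pi2]
  have e0 := h0.2 (⟨k+1, by omega⟩ : Fin (k+2))
  rw [Fin.sum_univ_two] at e0
  simp only [joint, Fin.prod_univ_two, Matrix.cons_val_zero, Matrix.cons_val_one,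
    Matrix.head_cons, chainJumpGame]
  rw [Fin.sum_univ_two]
  simp only [Fin.sum_univ_two]
  simp only [if_true, if_neg (by decide : ¬(1 : Fin 2) = 0), if_neg (by decide : ¬(0 : Fin 2) = 1)]
  set sE : Fin (k+2) := ⟨k+1, by omega⟩
  fin_cases i
  · norm_num
    linear_combination (ρ 1 sE 0 - ρ 1 sE 1) * e0
  · norm_num
    linear_combination (ρ 1 sE 1) * e0

end Helpers5
section Helpers6

variable {k : ℕ} {γ : ℝ}

lemma isPol_expert (i : Fin 2) : IsPol (jumpExpert k i) := by
  constructor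
  · intro s b; unfold jumpExpert; split_ifs <;> norm_num
  · intro s; by_cases hi : i = (0:Fin 2) <;> simp [jumpExpert, hi, Fin.sum_univ_two]

lemma isPol_learner (i : Fin 2) : IsPol (jumpLearner k i) := by
  constructor
  · intro s b; unfold jumpLearner; split_ifs <;> norm_num
  · intro s
    by_cases hi : i = (0:Fin 2) <;> by_cases hs : s.val = k + 1 <;>
      simp [jumpLearner, hi, hs, Fin.sum_univ_two]

lemma isPol_br : IsPol (jumpBR k) := by
  constructor
  · intro s b; unfold jumpBR; split_ifs <;> norm_num
  · intro s; simp [jumpBR, Fin.sum_univ_two]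

lemma pol_bounds1 (π : Fin (k+2) → Fin 2 → ℝ) (h : IsPol π) (s : Fin (k+2)) :
    0 ≤ π s 1 ∧ π s 1 ≤ 1 := by
  have h2 := h.2 s
  rw [Fin.sum_univ_two] at h2
  have := h.1 s 0
  have := h.1 s 1
  exact ⟨by linarith, by linarith⟩

end Helpers6

/-- for `k = ⌈log(ε(1-γ)/2)/log γ⌉`, the expert constantly playing
`(a₁^r, a₂^c)` is a Nash equilibrium whose occupancy of the absorbing state is
at most `ε/2`; the policy agreeing with it except playing `(a₁^r, a₁^c)` at
`s_exp` has BC error at most `ε`, while the constant-`a₂^r` policy is a best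
response of player 1 to `π₂` at expected L1 distance exactly `2` from `π^E₁`
under `μ_{π^E}`. -/
theorem nontrivial_delta_example (ε γ : ℝ) (hε : 0 < ε) (hγ0 : 0 < γ) (hγ1 : γ < 1)
    (k : ℕ) (hk : k = (⌈Real.log (ε * (1 - γ) / 2) / Real.log γ⌉).toNat) :
    occ (chainJumpGame k γ) (joint (jumpExpert k)) ⟨k + 1, by omega⟩ ≤ ε / 2 ∧
    (∀ (i : Fin 2) (πi' : Fin (k + 2) → Fin 2 → ℝ), IsPol πi' →
      value (chainJumpGame k γ) i (joint (dev (jumpExpert k) i πi')) ≤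
        value (chainJumpGame k γ) i (joint (jumpExpert k))) ∧
    (∀ i : Fin 2, bcErr (chainJumpGame k γ) (jumpExpert k) (jumpLearner k) i ≤ ε) ∧
    (∀ π1'' : Fin (k + 2) → Fin 2 → ℝ, IsPol π1'' →
      value (chainJumpGame k γ) 0 (joint (dev (jumpLearner k) 0 π1'')) ≤
        value (chainJumpGame k γ) 0 (joint (dev (jumpLearner k) 0 (jumpBR k)))) ∧
    ∑ s : Fin (k + 2), occ (chainJumpGame k γ) (joint (jumpExpert k)) s *
        ∑ b : Fin 2, |jumpBR k s b - jumpExpert k 0 s b| = 2 := by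
  have hγ0' : (0:ℝ) ≤ γ := hγ0.le
  have h1γ : (0:ℝ) < 1 - γ := by linarith
  have hE0 : IsPol (jumpExpert k 0) := isPol_expert 0
  have hE1 : IsPol (jumpExpert k 1) := isPol_expert 1
  have hL1 : IsPol (jumpLearner k 1) := isPol_learner 1
  have hpE : jumpExpert k 0 ⟨0, by omega⟩ 0 = 1 := by simp [jumpExpert]
  have hoccE : occ (chainJumpGame k γ) (joint (jumpExpert k)) ⟨k+1, by omega⟩ = γ^(k+1) := by
    rw [occ_sE _ hE0 hE1 hγ0' hγ1, hpE]; ring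
  -- the key power bound
  have hc : (0:ℝ) < ε * (1 - γ) / 2 := by
    have := mul_pos hε h1γ; linarith
  have hlog : Real.log γ < 0 := Real.log_neg hγ0 hγ1
  have hkx : Real.log (ε*(1-γ)/2) / Real.log γ ≤ (k:ℝ) := by
    rw [hk]
    calc Real.log (ε*(1-γ)/2) / Real.log γ
        ≤ (⌈Real.log (ε*(1-γ)/2) / Real.log γ⌉ : ℝ) := Int.le_ceil _
      _ ≤ (((⌈Real.log (ε*(1-γ)/2) / Real.log γ⌉).toNat : ℕ) : ℝ) := by
          exact_mod_cast Int.self_le_toNat _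
  have hklog : (k:ℝ) * Real.log γ ≤ Real.log (ε*(1-γ)/2) :=
    (div_le_iff_of_neg hlog).mp hkx
  have hγk : γ^k ≤ ε*(1-γ)/2 := by
    have h1 : γ^k = Real.exp ((k:ℝ) * Real.log γ) := by
      rw [← Real.log_pow, Real.exp_log (pow_pos hγ0 k)]
    rw [h1, ← Real.exp_log hc]
    exact Real.exp_le_exp.mpr hklog
  have hpow : γ^(k+1) ≤ ε*(1-γ)/2 := by
    calc γ^(k+1) = γ * γ^k := by ring
      _ ≤ 1 * (ε*(1-γ)/2) := mul_le_mul hγ1.le hγk (pow_nonneg hγ0' k) zero_le_one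
      _ = ε*(1-γ)/2 := one_mul _
  have hγk1γ : γ^(k+1) ≤ γ := by
    calc γ^(k+1) = γ * γ^k := by ring
      _ ≤ γ * 1 := mul_le_mul_of_nonneg_left (pow_le_one₀ hγ0' hγ1.le) hγ0'
      _ = γ := mul_one _
  have hγk1pos : (0:ℝ) ≤ γ^(k+1) := pow_nonneg hγ0' _
  have hinv : (0:ℝ) ≤ 1 / (1 - γ) := by positivity
  refine ⟨?_, ?_, ?_, ?_, ?_⟩
  · rw [hoccE]; nlinarith
  · intro i πi' hπ
    fin_cases i
    · show value (chainJumpGame k γ) 0 (joint (dev (jumpExpert k) 0 πi')) ≤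
          value (chainJumpGame k γ) 0 (joint (jumpExpert k))
      have hd0 : dev (jumpExpert k) 0 πi' 0 = πi' := Function.update_self _ _ _
      have hd1 : dev (jumpExpert k) 0 πi' 1 = jumpExpert k 1 :=
        Function.update_of_ne (by decide) _ _
      rw [value_formula _ (hd0 ▸ hπ) 0, value_formula _ hE0 0]
      rw [if_pos rfl, if_pos rfl, hoccE]
      rw [occ_sE _ (hd0 ▸ hπ) (hd1 ▸ hE1) hγ0' hγ1]
      rw [hd0, hd1]
      obtain ⟨hp0, hp1⟩ := pol_bounds πi' hπ ⟨0, by omega⟩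
      have hEe : jumpExpert k 1 (⟨k+1, by omega⟩ : Fin (k+2)) 0 = 0 := by simp [jumpExpert]
      have hEe1 : jumpExpert k 1 (⟨k+1, by omega⟩ : Fin (k+2)) 1 = 1 := by simp [jumpExpert]
      rw [hEe, hEe1]
      apply mul_le_mul_of_nonneg_left _ hinv
      set p := πi' ⟨0, by omega⟩ 0
      nlinarith
    · show value (chainJumpGame k γ) 1 (joint (dev (jumpExpert k) 1 πi')) ≤
          value (chainJumpGame k γ) 1 (joint (jumpExpert k))
      have hd0 : dev (jumpExpert k) 1 πi' 0 = jumpExpert k 0 :=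
        Function.update_of_ne (by decide) _ _
      have hd1 : dev (jumpExpert k) 1 πi' 1 = πi' := Function.update_self _ _ _
      rw [value_formula _ (hd0 ▸ hE0) 1, value_formula _ hE0 1]
      rw [if_neg (by decide : ¬(1:Fin 2) = 0), if_neg (by decide : ¬(1:Fin 2) = 0), hoccE]
      rw [occ_sE _ (hd0 ▸ hE0) (hd1 ▸ hπ) hγ0' hγ1]
      have hq : dev (jumpExpert k) 1 πi' 0 ⟨0, by omega⟩ 0 = 1 := by rw [hd0]; exact hpE
      rw [hq, hd1]
      have hEe1 : jumpExpert k 1 (⟨k+1, by omega⟩ : Fin (k+2)) 1 = 1 := by simp [jumpExpert]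
      rw [hEe1]
      apply mul_le_mul_of_nonneg_left _ hinv
      obtain ⟨hb0, hb1⟩ := pol_bounds1 πi' hπ ⟨k+1, by omega⟩
      nlinarith
  · intro i
    fin_cases i
    · have hz : ∀ s : Fin (k+2), ∑ b : Fin 2,
          |jumpLearner k 0 s b - jumpExpert k 0 s b| = 0 := by
        intro s
        rw [Fin.sum_univ_two]
        simp [jumpLearner, jumpExpert]
      unfold bcErr
      simp only [Fin.zero_eta, hz, mul_zero, Finset.sum_const_zero]
      linarith
    · have hinner : ∀ s : Fin (k+2), ∑ b : Fin 2,
          |jumpLearner k 1 s b - jumpExpert k 1 s b| =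
          if s = (⟨k+1, by omega⟩ : Fin (k+2)) then 2 else 0 := by
        intro s
        rw [Fin.sum_univ_two]
        by_cases hs : s.val = k+1
        · rw [if_pos (Fin.ext hs)]
          simp [jumpLearner, jumpExpert, hs]
          norm_num
        · rw [if_neg (fun h => hs (by rw [h]))]
          simp [jumpLearner, jumpExpert, hs]
      unfold bcErr
      simp only [Fin.mk_one, hinner, mul_ite, mul_zero, Finset.sum_ite_eq',
        Finset.mem_univ, if_true]
      rw [hoccE]
      nlinarith
  · intro π1'' hπ
    have hd0 : dev (jumpLearner k) 0 π1'' 0 = π1'' := Function.update_self _ _ _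
    have hd1 : dev (jumpLearner k) 0 π1'' 1 = jumpLearner k 1 :=
      Function.update_of_ne (by decide) _ _
    have hd0' : dev (jumpLearner k) 0 (jumpBR k) 0 = jumpBR k := Function.update_self _ _ _
    have hd1' : dev (jumpLearner k) 0 (jumpBR k) 1 = jumpLearner k 1 :=
      Function.update_of_ne (by decide) _ _
    rw [value_formula _ (hd0 ▸ hπ) 0, value_formula _ (hd0' ▸ isPol_br) 0]
    rw [if_pos rfl, if_pos rfl]
    rw [occ_sE _ (hd0 ▸ hπ) (hd1 ▸ hL1) hγ0' hγ1, occ_sE _ (hd0' ▸ isPol_br) (hd1' ▸ hL1) hγ0' hγ1]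
    rw [hd0, hd1, hd0', hd1']
    have hLe0 : jumpLearner k 1 (⟨k+1, by omega⟩ : Fin (k+2)) 0 = 1 := by
      simp [jumpLearner]
    have hLe1 : jumpLearner k 1 (⟨k+1, by omega⟩ : Fin (k+2)) 1 = 0 := by
      simp [jumpLearner]
    have hbr : jumpBR k ⟨0, by omega⟩ 0 = 0 := by simp [jumpBR]
    rw [hLe0, hLe1, hbr]
    apply mul_le_mul_of_nonneg_left _ hinv
    obtain ⟨hp0, hp1⟩ := pol_bounds π1'' hπ ⟨0, by omega⟩
    set p := π1'' ⟨0, by omega⟩ 0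
    nlinarith
  · have h2 : ∀ s : Fin (k+2), ∑ b : Fin 2, |jumpBR k s b - jumpExpert k 0 s b| = 2 := by
      intro s
      rw [Fin.sum_univ_two]
      simp [jumpBR, jumpExpert]
      norm_num
    simp only [h2]
    rw [← Finset.sum_mul, occ_sum_one _ hE0 hE1 hγ0' hγ1, one_mul]

end MAIL
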